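/- For all real numbers K and M, 12K² · ∫_0^1 ∫_{(y−1)/√3}^{(1−y)/√3} cosh²(Ky + M)·sinh²(√3·Kx) dx dy = (√3/8)·( −4 − 8K² + 4·cosh(2K) + cosh(2K−2M) + 4·cosh(2M) − 5·cosh(2K+2M) + 8K·sinh(2M) + 4K·sinh(2K+2M) ). -/

import Mathlib

/-- Explicit value of the squared `L²`-norm of `∂₁u₀` over the equilateral triangle of
area `1/√3` with vertices `(±1/√3, 0)` and `(0,1)`. -/
theorem norm_sq_partial_ground_state (K M : ℝ) :
    12 * K ^ 2 *
        ∫ y in (0 : ℝ)..1,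
          ∫ x in ((y - 1) / Real.sqrt 3)..((1 - y) / Real.sqrt 3),
            Real.cosh (K * y + M) ^ 2 * Real.sinh (Real.sqrt 3 * K * x) ^ 2 =
      (Real.sqrt 3 / 8) *
        (-4 - 8 * K ^ 2 + 4 * Real.cosh (2 * K) + Real.cosh (2 * K - 2 * M) +
          4 * Real.cosh (2 * M) - 5 * Real.cosh (2 * K + 2 * M) +
          8 * K * Real.sinh (2 * M) + 4 * K * Real.sinh (2 * K + 2 * M)) := by
  have hs : Real.sqrt 3 ≠ 0 := by positivity
  obtain hK | hK := eq_or_ne K 0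
  · subst hK
    rw [show (2:ℝ)*0-2*M = -(2*M) by ring, Real.cosh_neg, show (2:ℝ)*0 = 0 by ring,
      Real.cosh_zero, show (0:ℝ)+2*M = 2*M by ring]
    ring
  · have hc : Real.sqrt 3 * K ≠ 0 := mul_ne_zero hs hK
    -- inner integral
    have hF : ∀ x : ℝ, HasDerivAt
        (fun x => Real.sinh (2*(Real.sqrt 3*K)*x)/(4*(Real.sqrt 3*K)) - x/2)
        (Real.sinh (Real.sqrt 3*K*x)^2) x := by
      intro x
      have h1 : HasDerivAt (fun x : ℝ => 2*(Real.sqrt 3*K)*x) (2*(Real.sqrt 3*K)*1) x :=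
        (hasDerivAt_id x).const_mul (2*(Real.sqrt 3*K))
      have h2 := (h1.sinh.div_const (4*(Real.sqrt 3*K))).sub ((hasDerivAt_id x).div_const 2)
      refine h2.congr_deriv ?_
      rw [show 2*(Real.sqrt 3*K)*x = 2*(Real.sqrt 3*K*x) by ring, Real.cosh_two_mul,
        Real.cosh_sq]
      field_simp
      ring
    have hinner : ∀ y : ℝ,
        (∫ x in ((y - 1) / Real.sqrt 3)..((1 - y) / Real.sqrt 3),
            Real.cosh (K * y + M) ^ 2 * Real.sinh (Real.sqrt 3 * K * x) ^ 2)
        = Real.cosh (K*y+M)^2 *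
            (Real.sinh (2*K*(1-y))/(2*(Real.sqrt 3*K)) - (1-y)/Real.sqrt 3) := by
      intro y
      rw [intervalIntegral.integral_const_mul]
      congr 1
      rw [intervalIntegral.integral_eq_sub_of_hasDerivAt (fun x _ => hF x)
        ((Continuous.intervalIntegrable (by fun_prop) _ _))]
      rw [show 2*(Real.sqrt 3*K)*((1-y)/Real.sqrt 3) = 2*K*(1-y) by field_simp,
        show 2*(Real.sqrt 3*K)*((y-1)/Real.sqrt 3) = -(2*K*(1-y)) by field_simp; ring,
        Real.sinh_neg]
      field_simp
      ring
    rw [intervalIntegral.integral_congr (fun y _ => hinner y)]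
    -- outer integral via antiderivative
    have hG : ∀ y : ℝ, HasDerivAt
        (fun y : ℝ => ((y*Real.sinh (2*K+2*M) - Real.cosh (2*K-2*M-4*K*y)/(4*K)
            - Real.cosh (2*K-2*K*y)/K)/(8*K)
          - (y - y^2/2 + (1-y)*Real.sinh (2*K*y+2*M)/(2*K)
            + Real.cosh (2*K*y+2*M)/(4*K^2))/2) / Real.sqrt 3)
        (Real.cosh (K*y+M)^2 *
            (Real.sinh (2*K*(1-y))/(2*(Real.sqrt 3*K)) - (1-y)/Real.sqrt 3)) y := by
      intro y
      have e1 : HasDerivAt (fun y : ℝ => y * Real.sinh (2*K+2*M)) (1 * Real.sinh (2*K+2*M)) y :=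
        (hasDerivAt_id y).mul_const _
      have e2 : HasDerivAt (fun y : ℝ => 2*K-2*M-4*K*y) (0 - 4*K*1) y :=
        (hasDerivAt_const y (2*K-2*M)).sub ((hasDerivAt_id y).const_mul (4*K))
      have e3 : HasDerivAt (fun y : ℝ => 2*K-2*K*y) (0 - 2*K*1) y :=
        (hasDerivAt_const y (2*K)).sub ((hasDerivAt_id y).const_mul (2*K))
      have e4 : HasDerivAt (fun y : ℝ => y - y^2/2) (1 - (↑2*y^(2-1))/2) y :=
        (hasDerivAt_id y).sub ((hasDerivAt_pow 2 y).div_const 2)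
      have eA : HasDerivAt (fun y : ℝ => 1 - y) (0 - 1) y :=
        (hasDerivAt_const y (1:ℝ)).sub (hasDerivAt_id y)
      have eB : HasDerivAt (fun y : ℝ => 2*K*y+2*M) (2*K*1) y :=
        ((hasDerivAt_id y).const_mul (2*K)).add_const (2*M)
      have htot := ((((e1.sub (e2.cosh.div_const (4*K))).sub
          (e3.cosh.div_const K)).div_const (8*K)).sub
        (((e4.add ((eA.mul eB.sinh).div_const (2*K))).add
          (eB.cosh.div_const (4*K^2))).div_const 2)).div_const (Real.sqrt 3)
      refine htot.congr_deriv ?_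
      rw [show Real.cosh (K*y+M)^2 = (Real.cosh (2*K*y+2*M)+1)/2 by
            rw [show 2*K*y+2*M = 2*(K*y+M) by ring, Real.cosh_two_mul, Real.cosh_sq]; ring,
        show 2*K*(1-y) = 2*K - 2*K*y by ring,
        show 2*K-2*M-4*K*y = 2*K - 2*M - (2*K*y + 2*K*y) by ring]
      simp only [Real.sinh_eq, Real.cosh_eq, Real.exp_add, Real.exp_sub, Real.exp_neg]
      field_simp
      ring
    rw [intervalIntegral.integral_eq_sub_of_hasDerivAt (fun y _ => hG y)
      ((Continuous.intervalIntegrable (by fun_prop) _ _))]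
    rw [show 2*K-2*M-4*K*(1:ℝ) = -(2*K+2*M) by ring, Real.cosh_neg,
      show 2*K-2*K*(1:ℝ) = 0 by ring, Real.cosh_zero,
      show 2*K*(1:ℝ)+2*M = 2*K+2*M by ring,
      show 2*K-2*M-4*K*(0:ℝ) = 2*K-2*M by ring,
      show 2*K-2*K*(0:ℝ) = 2*K by ring,
      show 2*K*(0:ℝ)+2*M = 2*M by ring]
    field_simp [hK]
    ring_nf
    rw [show (Real.sqrt 3)^2 = 3 by
      rw [Real.sq_sqrt (by norm_num : (0:ℝ) ≤ 3)]]
    ring
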